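/- Let f be twice continuously differentiable and 2s-restricted strongly convex with constant ℓ_{2s} > 0. If x* is an α-stationary point of min{f(x) : ‖x‖_0 ≤ s} with ‖x*‖_0 < s, then x* is the unique global minimizer, and moreover f(x) ≥ f(x*) + (ℓ_{2s}/2)‖x − x*‖² for every s-sparse x. -/

import Mathlib

open scoped InnerProductSpace
open RealInnerProductSpace

/-- `x` is `s`-sparse: it has at most `s` nonzero entries. -/
def Sparse {n : ℕ} (s : ℕ) (x : EuclideanSpace ℝ (Fin n)) : Prop :=
  {i | x i ≠ 0}.ncard ≤ s

/-- The hard-thresholding operator `Π_s(x) = argmin {‖w - x‖ : ‖w‖₀ ≤ s}`. -/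
def HT {n : ℕ} (s : ℕ) (x : EuclideanSpace ℝ (Fin n)) : Set (EuclideanSpace ℝ (Fin n)) :=
  {u | Sparse s u ∧ ∀ w, Sparse s w → ‖u - x‖ ≤ ‖w - x‖}

lemma norm_sq_eq_sum {n : ℕ} (x : EuclideanSpace ℝ (Fin n)) :
    ‖x‖ ^ 2 = ∑ j, (x j) ^ 2 := by
  rw [EuclideanSpace.norm_eq, Real.sq_sqrt (by positivity)]
  simp [sq_abs]

/-- An `α`-stationary point `x*` with `‖x*‖₀ < s` of a `2s`-restricted strongly convex
function is the unique global minimizer over `s`-sparse vectors, with quadratic growth. -/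
theorem stmt_7 {n s : ℕ} (f : EuclideanSpace ℝ (Fin n) → ℝ) (hf : ContDiff ℝ 2 f)
    (ℓ : ℝ) (hℓ : 0 < ℓ)
    (hRSC : ∀ z x : EuclideanSpace ℝ (Fin n), Sparse s z → Sparse s x →
      Sparse (2 * s) (z - x) →
      f z ≥ f x + ⟪gradient f x, z - x⟫_ℝ + (ℓ / 2) * ‖z - x‖ ^ 2)
    (xs : EuclideanSpace ℝ (Fin n)) (hcard : {i | xs i ≠ 0}.ncard < s)
    (α : ℝ) (hα : 0 < α) (hstat : xs ∈ HT s (xs - α • gradient f xs)) :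
    (∀ x : EuclideanSpace ℝ (Fin n), Sparse s x →
        f xs + (ℓ / 2) * ‖x - xs‖ ^ 2 ≤ f x) ∧
    (∀ x : EuclideanSpace ℝ (Fin n), Sparse s x → x ≠ xs → f xs < f x) := by
  set g := gradient f xs with hg
  have hxs_sparse : Sparse s xs := le_of_lt hcard
  -- gradient vanishes
  have hgrad : g = 0 := by
    by_contra hne
    obtain ⟨i, hi⟩ : ∃ i, g i ≠ 0 := by
      by_contra h
      push_neg at h
      exact hne (by ext j; simpa using h j)
    set y := xs - α • g with hy
    set w : EuclideanSpace ℝ (Fin n) := WithLp.toLp 2 (Function.update xs i (xs i - α * g i)) with hw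
    have hws : Sparse s w := by
      have hsub : {j | w j ≠ 0} ⊆ insert i {j | xs j ≠ 0} := by
        intro j hj
        by_cases hji : j = i
        · simp [hji]
        · right
          simpa [hw, Function.update_of_ne hji] using hj
      calc {j | w j ≠ 0}.ncard ≤ (insert i {j | xs j ≠ 0}).ncard :=
            Set.ncard_le_ncard hsub (Set.toFinite _)
        _ ≤ {j | xs j ≠ 0}.ncard + 1 := Set.ncard_insert_le _ _
        _ ≤ s := hcard
    have hle := hstat.2 w hws
    have hsq : ‖xs - y‖ ^ 2 ≤ ‖w - y‖ ^ 2 := by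
      apply pow_le_pow_left₀ (norm_nonneg _) hle
    rw [norm_sq_eq_sum, norm_sq_eq_sum] at hsq
    have h1 : ∀ j, (xs - y) j = α * g j := by
      intro j; simp [hy]
    have h2 : ∀ j, (w - y) j = if j = i then 0 else α * g j := by
      intro j
      by_cases hji : j = i
      · subst hji
        simp [hw, hy]
      · simp [hw, hy, Function.update_of_ne hji, hji]
    have hdiff : ∑ j, ((xs - y) j) ^ 2 - ∑ j, ((w - y) j) ^ 2 = (α * g i) ^ 2 := by
      rw [← Finset.sum_sub_distrib]
      rw [Finset.sum_eq_single i]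
      · rw [h1, h2]; simp
      · intro j _ hji
        rw [h1, h2]; simp [hji]
      · intro h; exact absurd (Finset.mem_univ i) h
    have hpos : 0 < (α * g i) ^ 2 := by positivity
    linarith
  have key : ∀ x : EuclideanSpace ℝ (Fin n), Sparse s x →
      f xs + (ℓ / 2) * ‖x - xs‖ ^ 2 ≤ f x := by
    intro x hx
    have hdiffsparse : Sparse (2 * s) (x - xs) := by
      have hsub : {j | (x - xs) j ≠ 0} ⊆ {j | x j ≠ 0} ∪ {j | xs j ≠ 0} := by
        intro j hj
        by_contra h
        simp only [Set.mem_union, Set.mem_setOf_eq, not_or, not_not] at h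
        apply hj
        simp [h.1, h.2]
      calc {j | (x - xs) j ≠ 0}.ncard ≤ ({j | x j ≠ 0} ∪ {j | xs j ≠ 0}).ncard :=
            Set.ncard_le_ncard hsub (Set.toFinite _)
        _ ≤ {j | x j ≠ 0}.ncard + {j | xs j ≠ 0}.ncard := Set.ncard_union_le _ _
        _ ≤ s + s := add_le_add hx hxs_sparse
        _ = 2 * s := (two_mul s).symm
    have := hRSC x xs hx hxs_sparse hdiffsparse
    rw [← hg, hgrad] at this
    simp only [inner_zero_left] at this
    linarith
  refine ⟨key, fun x hx hne => ?_⟩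
  have h1 := key x hx
  have h2 : 0 < ‖x - xs‖ ^ 2 := by
    have : x - xs ≠ 0 := sub_ne_zero_of_ne hne
    exact pow_pos (by rwa [norm_pos_iff]) 2
  nlinarith
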